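/- An n×n matrix M is a P-matrix (all principal minors strictly positive) if and only if for every nonzero z ∈ ℝⁿ there exists an index k with z_k(Mz)_k > 0. -/

import Mathlib

open Matrix

/-- `M` is a P-matrix: all principal minors are strictly positive. -/
def IsPMatrix {n : ℕ} (M : Matrix (Fin n) (Fin n) ℝ) : Prop :=
  ∀ α : Finset (Fin n),
    0 < (M.submatrix (fun i : α => (i : Fin n)) (fun i : α => (i : Fin n))).det

lemma det_pos_of_sign {ι : Type*} [Fintype ι] [DecidableEq ι] (A : Matrix ι ι ℝ)
    (h : ∀ v : ι → ℝ, v ≠ 0 → ∃ k, 0 < v k * A.mulVec v k) : 0 < A.det := by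
  set f : ℝ → ℝ := fun t => ((1 - t) • (1 : Matrix ι ι ℝ) + t • A).det with hf
  have hc : Continuous f := by
    apply Continuous.matrix_det
    fun_prop
  have hne : ∀ t ∈ Set.Icc (0 : ℝ) 1, f t ≠ 0 := by
    rintro t ⟨ht0, ht1⟩ hft
    obtain ⟨v, hv, hmv⟩ := (Matrix.exists_mulVec_eq_zero_iff).mpr hft
    obtain ⟨k, hk⟩ := h v hv
    have hcomp : (1 - t) * v k + t * (A.mulVec v k) = 0 := by
      have := congrFun hmv k
      simpa [Matrix.add_mulVec, Matrix.smul_mulVec] using this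
    rcases eq_or_lt_of_le ht0 with h0 | h0
    · -- t = 0 : then v k = 0 for all k, contradiction with hk
      have : v k = 0 := by simpa [← h0] using hcomp
      simp [this] at hk
    · have h1 : 0 ≤ (1 - t) * (v k * v k) :=
        mul_nonneg (by linarith) (mul_self_nonneg _)
      have h2 : 0 < t * (v k * A.mulVec v k) := mul_pos h0 hk
      have h3 : v k * ((1 - t) * v k + t * A.mulVec v k) = 0 := by rw [hcomp, mul_zero]
      nlinarith
  have h0 : f 0 = 1 := by simp [hf]
  have h1 : f 1 = A.det := by simp [hf]
  by_contra hd
  push_neg at hd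
  have h1' : f 1 < 0 := by
    rcases lt_or_eq_of_le (h1 ▸ hd) with h | h
    · exact h
    · exact absurd h (hne 1 (by norm_num : (1:ℝ) ∈ Set.Icc (0:ℝ) 1))
  have := intermediate_value_Icc' (by norm_num : (0:ℝ) ≤ 1) hc.continuousOn
  obtain ⟨t, ht, hft⟩ := this ⟨le_of_lt h1', by rw [h0]; norm_num⟩
  exact hne t ht hft

lemma isPMatrix_submatrix {n m : ℕ} {M : Matrix (Fin n) (Fin n) ℝ} (hM : IsPMatrix M)
    (f : Fin m → Fin n) (hf : Function.Injective f) : IsPMatrix (M.submatrix f f) := by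
  intro β
  have hbij : Function.Bijective
      (fun b : {x // x ∈ β} => (⟨f b, Finset.mem_image_of_mem f b.2⟩ :
        {y // y ∈ β.image f})) := by
    constructor
    · intro a b hab
      exact Subtype.ext (hf (congrArg Subtype.val hab))
    · rintro ⟨y, hy⟩
      obtain ⟨b, hb, rfl⟩ := Finset.mem_image.mp hy
      exact ⟨⟨b, hb⟩, rfl⟩
  let e := Equiv.ofBijective _ hbij
  have key := hM (β.image f)
  have heq : ((M.submatrix f f).submatrix (fun i : β => (i : Fin m))
      (fun i : β => (i : Fin m))) =
      ((M.submatrix (fun i : (β.image f) => (i : Fin n))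
        (fun i : (β.image f) => (i : Fin n))).submatrix e e) := by
    ext i j
    rfl
  rw [heq, Matrix.det_submatrix_equiv_self]
  exact key

lemma IsPMatrix.det_pos {n : ℕ} {M : Matrix (Fin n) (Fin n) ℝ} (h : IsPMatrix M) :
    0 < M.det := by
  have key := h Finset.univ
  have heq : (M.submatrix (fun i : (Finset.univ : Finset (Fin n)) => (i : Fin n))
      (fun i : (Finset.univ : Finset (Fin n)) => (i : Fin n))) =
      M.submatrix (Equiv.subtypeUnivEquiv (fun x => Finset.mem_univ x))
        (Equiv.subtypeUnivEquiv (fun x => Finset.mem_univ x)) := rfl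
  rwa [heq, Matrix.det_submatrix_equiv_self] at key

lemma det_updateRow_single {m : ℕ} (B : Matrix (Fin (m + 1)) (Fin (m + 1)) ℝ)
    (a : Fin (m + 1)) :
    (B.updateRow a (Pi.single a 1)).det = (B.submatrix a.succAbove a.succAbove).det := by
  rw [Matrix.det_succ_row _ a]
  rw [Finset.sum_eq_single a]
  · have h1 : (B.updateRow a (Pi.single a 1)) a a = 1 := by simp
    have h2 : ((B.updateRow a (Pi.single a 1)).submatrix a.succAbove a.succAbove) =
        B.submatrix a.succAbove a.succAbove := by
      ext i j
      simp [Matrix.updateRow_apply, Fin.succAbove_ne a i]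
    rw [h1, h2]
    have : (-1 : ℝ) ^ ((a : ℕ) + (a : ℕ)) = 1 := by
      rw [← two_mul, pow_mul]
      norm_num
    rw [this, one_mul, one_mul]
  · intro j _ hj
    have : (B.updateRow a (Pi.single a 1)) a j = 0 := by
      simp [Pi.single_apply, hj.symm]
    rw [this]
    ring
  · intro h
    exact absurd (Finset.mem_univ a) h

lemma det_add_diagonal_pos : ∀ (n : ℕ) (A : Matrix (Fin n) (Fin n) ℝ), IsPMatrix A →
    ∀ d : Fin n → ℝ, (∀ i, 0 ≤ d i) → 0 < (A + Matrix.diagonal d).det := by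
  intro n
  induction n with
  | zero =>
    intro A _ d _
    simp [Matrix.det_fin_zero]
  | succ n ih =>
    intro A hA d hd
    have main : ∀ s : Finset (Fin (n + 1)),
        0 < (A + Matrix.diagonal (fun i => if i ∈ s then d i else 0)).det := by
      intro s
      induction s using Finset.induction_on with
      | empty =>
        simpa using hA.det_pos
      | @insert a t ha iht =>
        set Dt : Fin (n + 1) → ℝ := fun i => if i ∈ t then d i else 0 with hDt
        have hDtnn : ∀ i, 0 ≤ Dt i := by
          intro i
          simp only [hDt]
          split
          · exact hd i
          · exact le_rfl
        set B := A + Matrix.diagonal Dt with hB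
        have hmat : A + Matrix.diagonal (fun i => if i ∈ insert a t then d i else 0) =
            B.updateRow a (B a + d a • (Pi.single a 1 : Fin (n + 1) → ℝ)) := by
          ext i j
          by_cases hia : i = a
          · subst hia
            simp only [Matrix.updateRow_self, hB, Matrix.add_apply, Pi.add_apply,
              Matrix.diagonal_apply, Pi.smul_apply, Pi.single_apply, smul_eq_mul]
            by_cases hij : i = j
            · subst hij
              have h0 : Dt i = 0 := by simp [hDt, ha]
              simp [ha, Finset.mem_insert, h0]
            · simp only [Matrix.diagonal_apply, hij, if_false, Pi.single_apply]
              have : ¬ j = i := fun h => hij h.symm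
              simp [this]
          · rw [Matrix.updateRow_ne hia]
            simp only [hB, Matrix.add_apply, Matrix.diagonal_apply]
            by_cases hij : i = j
            · subst hij
              have : i ∈ insert a t ↔ i ∈ t := by
                simp [Finset.mem_insert, hia]
              simp [this, hDt]
            · simp [hij]
        rw [hmat, Matrix.det_updateRow_add, Matrix.det_updateRow_smul,
          Matrix.updateRow_eq_self]
        have hcof : (B.updateRow a (Pi.single a 1)).det =
            (B.submatrix a.succAbove a.succAbove).det := det_updateRow_single B a
        have hsub : B.submatrix a.succAbove a.succAbove =
            A.submatrix a.succAbove a.succAbove +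
              Matrix.diagonal (fun i => Dt (a.succAbove i)) := by
          ext i j
          simp only [hB, Matrix.submatrix_apply, Matrix.add_apply, Matrix.diagonal_apply]
          by_cases hij : i = j
          · subst hij; simp
          · have : a.succAbove i ≠ a.succAbove j :=
              fun h => hij (Fin.succAbove_right_injective h)
            simp [hij, this]
        have hpos : 0 < (B.submatrix a.succAbove a.succAbove).det := by
          rw [hsub]
          exact ih _ (isPMatrix_submatrix hA _ (Fin.succAbove_right_injective))
            _ (fun i => hDtnn _)
        have : 0 ≤ d a * (B.updateRow a (Pi.single a 1)).det := by
          rw [hcof]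
          exact mul_nonneg (hd a) (le_of_lt hpos)
        linarith [iht]
    have heq : (fun i : Fin (n + 1) => if i ∈ (Finset.univ : Finset (Fin (n + 1))) then d i else 0) = d := by
      funext i
      simp
    have := main Finset.univ
    rwa [heq] at this

theorem stmt_3 {n : ℕ} (M : Matrix (Fin n) (Fin n) ℝ) :
    IsPMatrix M ↔ ∀ z : Fin n → ℝ, z ≠ 0 → ∃ k, 0 < z k * M.mulVec z k := by
  constructor
  · -- P-matrix implies sign condition
    intro hP z hz
    by_contra hc
    push_neg at hc
    classical
    set s : Finset (Fin n) := Finset.univ.filter (fun k => z k ≠ 0) with hs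
    set m := s.card with hm
    set g : Fin m → Fin n := fun i => ((s.orderIsoOfFin rfl i : s) : Fin n) with hg
    have hginj : Function.Injective g := by
      intro i j hij
      exact (s.orderIsoOfFin rfl).injective (Subtype.ext hij)
    have hgmem : ∀ i, g i ∈ s := fun i => (s.orderIsoOfFin rfl i).2
    set A := M.submatrix g g with hA
    have hAP : IsPMatrix A := isPMatrix_submatrix hP g hginj
    set x : Fin m → ℝ := fun i => z (g i) with hx
    have hxne : ∀ i, x i ≠ 0 := by
      intro i
      have := hgmem i
      simpa [hs, Finset.mem_filter] using this
    have hAx : ∀ i, A.mulVec x i = M.mulVec z (g i) := by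
      intro i
      have e1 : A.mulVec x i = ∑ j : Fin m, M (g i) (g j) * z (g j) := by
        simp [hA, hx, Matrix.mulVec, dotProduct]
      have e2 : M.mulVec z (g i) = ∑ k : Fin n, M (g i) k * z k := by
        simp [Matrix.mulVec, dotProduct]
      rw [e1, e2]
      have e3 : ∑ j : Fin m, M (g i) (g j) * z (g j) = ∑ b : s, M (g i) b * z b :=
        Fintype.sum_equiv (s.orderIsoOfFin rfl).toEquiv _ _ (fun j => rfl)
      have e4 : ∑ b : s, (M (g i) b * z b : ℝ) = ∑ k ∈ s, M (g i) k * z k :=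
        Finset.sum_coe_sort s (fun k => M (g i) k * z k)
      rw [e3, e4]
      apply Finset.sum_subset (Finset.subset_univ s)
      intro k _ hk
      have : z k = 0 := by
        by_contra hzk
        exact hk (by simp [hs, Finset.mem_filter, hzk])
      simp [this]
    set d : Fin m → ℝ := fun i => -(A.mulVec x i) / x i with hd
    have hdnn : ∀ i, 0 ≤ d i := by
      intro i
      have hle : x i * A.mulVec x i ≤ 0 := by
        rw [hAx i]
        exact hc (g i)
      have hxi := hxne i
      have heq : d i = -(x i * A.mulVec x i) / (x i ^ 2) := by
        rw [hd]
        field_simp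
      rw [heq]
      exact div_nonneg (by linarith) (sq_nonneg _)
    have hBx : (A + Matrix.diagonal d).mulVec x = 0 := by
      funext i
      have : (A + Matrix.diagonal d).mulVec x i = A.mulVec x i + d i * x i := by
        rw [Matrix.add_mulVec]
        simp [Matrix.mulVec_diagonal]
      rw [this]
      have hxi := hxne i
      simp only [hd]
      field_simp
      simp
    have hx0 : x ≠ 0 := by
      obtain ⟨k, hk⟩ := Function.ne_iff.mp hz
      simp only [Pi.zero_apply] at hk
      have hks : k ∈ s := by simp [hs, Finset.mem_filter, hk]
      intro h0
      set i := (s.orderIsoOfFin rfl).symm ⟨k, hks⟩ with hi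
      have : x i = z k := by
        simp only [hx, hg, hi, OrderIso.apply_symm_apply]
      rw [congrFun h0 i] at this
      exact hk this.symm
    have hdet : (A + Matrix.diagonal d).det = 0 :=
      (Matrix.exists_mulVec_eq_zero_iff).mp ⟨x, hx0, hBx⟩
    have := det_add_diagonal_pos m A hAP d hdnn
    rw [hdet] at this
    exact lt_irrefl 0 this
  · -- sign condition implies P-matrix
    intro h α
    classical
    apply det_pos_of_sign
    intro v hv
    set z : Fin n → ℝ := fun k => if hk : k ∈ α then v ⟨k, hk⟩ else 0 with hzdef
    have hz : z ≠ 0 := by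
      obtain ⟨b, hb⟩ := Function.ne_iff.mp hv
      simp only [Pi.zero_apply] at hb
      intro h0
      apply hb
      have := congrFun h0 b
      simpa [hzdef, b.2] using this
    obtain ⟨k, hk⟩ := h z hz
    have hkα : k ∈ α := by
      by_contra hkn
      rw [hzdef] at hk
      simp [hkn] at hk
    refine ⟨⟨k, hkα⟩, ?_⟩
    have hmv : (M.submatrix (fun i : α => (i : Fin n))
        (fun i : α => (i : Fin n))).mulVec v ⟨k, hkα⟩ = M.mulVec z k := by
      have e1 : (M.submatrix (fun i : α => (i : Fin n))
          (fun i : α => (i : Fin n))).mulVec v ⟨k, hkα⟩ =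
          ∑ j : α, M k (j : Fin n) * v j := by
        simp [Matrix.mulVec, dotProduct]
      have e2 : M.mulVec z k = ∑ c : Fin n, M k c * z c := by
        simp [Matrix.mulVec, dotProduct]
      rw [e1, e2]
      have e3 : ∑ c : Fin n, M k c * z c = ∑ c ∈ α, M k c * z c := by
        symm
        apply Finset.sum_subset (Finset.subset_univ α)
        intro c _ hcn
        simp [hzdef, hcn]
      have e4 : ∑ c ∈ α, M k c * z c = ∑ j : α, M k (j : Fin n) * z (j : Fin n) :=
        (Finset.sum_coe_sort α _).symm
      rw [e3, e4]
      apply Finset.sum_congr rfl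
      intro j _
      congr 1
      simp [hzdef, j.2]
    rw [hmv]
    have hzk : z k = v ⟨k, hkα⟩ := by simp [hzdef, hkα]
    rw [← hzk]
    exact hk
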